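/- Let H be a complex Hilbert space, G a bounded positive definite operator with ‖G‖ = 1/κ, and u ∈ H. If the family of vectors xₙ = (I − (κ − 1/n) G)⁻¹ u, n ∈ ℕ, is bounded in norm, then u belongs to the range of I − κG. -/

import Mathlib

open scoped InnerProductSpace
open Filter Topology


lemma auxA {H : Type*} [NormedAddCommGroup H] [InnerProductSpace ℂ H]
    (G : H →L[ℂ] H) (hsym : ∀ x y : H, ⟪G x, y⟫_ℂ = ⟪x, G y⟫_ℂ) (hpos : ∀ x : H, 0 ≤ (⟪G x, x⟫_ℂ).re)
    (κ : ℝ) (hκ : 0 < κ) (hnorm : ‖G‖ ≤ 1 / κ) (z : H) :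
    κ * ‖G z‖ ^ 2 ≤ (⟪G z, z⟫_ℂ).re := by
  set a := (⟪G z, z⟫_ℂ).re with ha
  set b := (‖G z‖ : ℝ) ^ 2 with hb
  set c := (⟪G (G z), G z⟫_ℂ).re with hc
  have ha0 : 0 ≤ a := hpos z
  have hb0 : 0 ≤ b := by positivity
  have key : ∀ t : ℝ, 0 ≤ c * (t * t) + (2 * b) * t + a := by
    intro t
    have h0 := hpos (z + (t : ℂ) • G z)
    have hinner : ⟪G (G z), z⟫_ℂ = ⟪G z, G z⟫_ℂ := hsym (G z) z
    have hself : (⟪G z, G z⟫_ℂ) = (b : ℂ) := by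
      rw [hb]; exact_mod_cast inner_self_eq_norm_sq_to_K (𝕜 := ℂ) (G z)
    simp only [map_add, map_smul, inner_add_left, inner_add_right, inner_smul_left,
      inner_smul_right, Complex.conj_ofReal, hinner, hself] at h0
    simp only [Complex.add_re, Complex.mul_re, Complex.ofReal_re, Complex.ofReal_im] at h0
    push_cast at h0
    nlinarith [h0]
  have hd := discrim_le_zero key
  rw [discrim] at hd
  have hcb : c ≤ (1 / κ) * b := by
    have h1 : c ≤ ‖G (G z)‖ * ‖G z‖ := re_inner_le_norm (𝕜 := ℂ) _ _
    have h2 : ‖G (G z)‖ ≤ ‖G‖ * ‖G z‖ := G.le_opNorm _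
    have h3 : ‖G‖ * ‖G z‖ ≤ (1/κ) * ‖G z‖ := by
      apply mul_le_mul_of_nonneg_right hnorm (norm_nonneg _)
    have h4 := mul_le_mul_of_nonneg_right h2 (norm_nonneg (G z))
    have h5 := mul_le_mul_of_nonneg_right h3 (norm_nonneg (G z))
    have hb' : b = ‖G z‖ * ‖G z‖ := by rw [hb]; ring
    calc c ≤ ‖G (G z)‖ * ‖G z‖ := h1
      _ ≤ ‖G‖ * ‖G z‖ * ‖G z‖ := h4
      _ ≤ 1 / κ * ‖G z‖ * ‖G z‖ := h5
      _ = 1 / κ * b := by rw [hb']; ring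
  have hcbκ : c * κ ≤ b := by
    rw [one_div, inv_mul_eq_div] at hcb
    exact (le_div_iff₀ hκ).mp hcb
  have hb2 : b ^ 2 ≤ c * a := by nlinarith
  rcases eq_or_lt_of_le hb0 with h | h
  · rw [← h]; simpa using ha0
  · nlinarith [mul_le_mul_of_nonneg_right hcbκ ha0, mul_le_mul_of_nonneg_left hb2 hκ.le]

lemma auxB {H : Type*} [NormedAddCommGroup H] [InnerProductSpace ℂ H]
    (G : H →L[ℂ] H) (hsym : ∀ x y : H, ⟪G x, y⟫_ℂ = ⟪x, G y⟫_ℂ)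
    (hpos : ∀ x : H, 0 ≤ (⟪G x, x⟫_ℂ).re)
    (κ : ℝ) (hκ : 0 < κ) (hnorm : ‖G‖ ≤ 1 / κ) (u : H)
    (σ τ : ℝ) (hστ : σ ≤ τ) (hτ : τ ≤ κ)
    (S T : (H →L[ℂ] H)ˣ)
    (hS : (S : H →L[ℂ] H) = 1 - (σ : ℂ) • G) (hT : (T : H →L[ℂ] H) = 1 - (τ : ℂ) • G) :
    ‖(↑T⁻¹ : H →L[ℂ] H) u - (↑S⁻¹ : H →L[ℂ] H) u‖ ^ 2 ≤
      ‖(↑T⁻¹ : H →L[ℂ] H) u‖ ^ 2 - ‖(↑S⁻¹ : H →L[ℂ] H) u‖ ^ 2 := by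
  obtain ⟨Sv, hSv⟩ : ∃ A : H →L[ℂ] H, A = (↑S : H →L[ℂ] H) := ⟨_, rfl⟩
  obtain ⟨Tv, hTv⟩ : ∃ A : H →L[ℂ] H, A = (↑T : H →L[ℂ] H) := ⟨_, rfl⟩
  obtain ⟨Δσ, hΔσ⟩ : ∃ A : H →L[ℂ] H, A = (↑S⁻¹ : H →L[ℂ] H) := ⟨_, rfl⟩
  obtain ⟨Δτ, hΔτ⟩ : ∃ A : H →L[ℂ] H, A = (↑T⁻¹ : H →L[ℂ] H) := ⟨_, rfl⟩
  rw [← hΔσ, ← hΔτ]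
  rw [← hSv] at hS
  rw [← hTv] at hT
  have appSΔ : ∀ v, Sv (Δσ v) = v := by
    intro v
    rw [hSv, hΔσ, ← ContinuousLinearMap.mul_apply, S.mul_inv, ContinuousLinearMap.one_apply]
  have appΔS : ∀ v, Δσ (Sv v) = v := by
    intro v
    rw [hSv, hΔσ, ← ContinuousLinearMap.mul_apply, S.inv_mul, ContinuousLinearMap.one_apply]
  have appTΔ : ∀ v, Tv (Δτ v) = v := by
    intro v
    rw [hTv, hΔτ, ← ContinuousLinearMap.mul_apply, T.mul_inv, ContinuousLinearMap.one_apply]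
  obtain ⟨xσ, hxσ⟩ : ∃ w : H, w = Δσ u := ⟨_, rfl⟩
  obtain ⟨xτ, hxτ⟩ : ∃ w : H, w = Δτ u := ⟨_, rfl⟩
  obtain ⟨z, hz⟩ : ∃ w : H, w = Δτ xσ := ⟨_, rfl⟩
  rw [← hxσ, ← hxτ]
  -- symmetry of Sv
  have symS : ∀ x y : H, ⟪Sv x, y⟫_ℂ = ⟪x, Sv y⟫_ℂ := by
    intro x y
    rw [hS]
    simp only [ContinuousLinearMap.sub_apply, ContinuousLinearMap.smul_apply,
      ContinuousLinearMap.one_apply, inner_sub_left, inner_sub_right, inner_smul_left,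
      inner_smul_right, Complex.conj_ofReal, hsym x y]
  have symΔσ : ∀ x y : H, ⟪Δσ x, y⟫_ℂ = ⟪x, Δσ y⟫_ℂ := by
    intro x y
    calc ⟪Δσ x, y⟫_ℂ = ⟪Δσ x, Sv (Δσ y)⟫_ℂ := by rw [appSΔ]
      _ = ⟪Sv (Δσ x), Δσ y⟫_ℂ := (symS _ _).symm
      _ = ⟪x, Δσ y⟫_ℂ := by rw [appSΔ]
  -- commutation
  have hGS : Commute G Sv := by
    rw [hS]
    exact Commute.sub_right (Commute.one_right G) ((Commute.refl G).smul_right _)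
  have hST : Commute Sv Tv := by
    rw [hS, hT]
    exact Commute.sub_left
      (Commute.sub_right (Commute.one_right _) ((Commute.one_left G).smul_right _))
      (Commute.sub_right (((Commute.one_right G).smul_left _))
        (((Commute.refl G).smul_left _).smul_right _))
  have hSΔτ : Commute Sv Δτ := by
    rw [hSv, hΔτ]
    rw [hSv, hTv] at hST
    exact hST.units_inv_right
  have commSΔτ : ∀ v, Sv (Δτ v) = Δτ (Sv v) := by
    intro v
    have := congrArg (fun A : H →L[ℂ] H => A v) hSΔτ.eq
    simpa [ContinuousLinearMap.mul_apply] using this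
  have commGS : ∀ v, G (Sv v) = Sv (G v) := by
    intro v
    have := congrArg (fun A : H →L[ℂ] H => A v) hGS.eq
    simpa [ContinuousLinearMap.mul_apply] using this
  -- basic identities
  have hSxσ : Sv xσ = u := by rw [hxσ]; exact appSΔ u
  have hTxτ : Tv xτ = u := by rw [hxτ]; exact appTΔ u
  have hSvT : Sv = Tv + ((τ - σ : ℝ) : ℂ) • G := by
    rw [hS, hT]
    push_cast
    rw [sub_smul]
    abel
  have h1 : Sv xτ = u + ((τ - σ : ℝ) : ℂ) • G xτ := by
    rw [hSvT, ContinuousLinearMap.add_apply, ContinuousLinearMap.smul_apply, hTxτ]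
  have h2 : xτ - xσ = ((τ - σ : ℝ) : ℂ) • Δσ (G xτ) := by
    have h := congrArg Δσ h1
    rw [appΔS, map_add, map_smul, ← hxσ] at h
    conv_lhs => rw [h]
    abel
  have h3 : xτ = Sv z := by
    rw [hz, commSΔτ, hSxσ]; exact hxτ
  have h4 : xσ = Tv z := by rw [hz]; exact (appTΔ xσ).symm
  -- main inner product computation
  have hb0 : (0:ℝ) ≤ ‖G z‖ ^ 2 := by positivity
  have hzb : ⟪G z, G z⟫_ℂ = ((‖G z‖ : ℂ)) ^ 2 :=
    inner_self_eq_norm_sq_to_K (𝕜 := ℂ) (G z)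
  have hkey : (⟪xτ - xσ, xσ⟫_ℂ).re
      = (τ - σ) * ((⟪G z, z⟫_ℂ).re - τ * ‖G z‖ ^ 2) := by
    have e1 : ⟪xτ - xσ, xσ⟫_ℂ = ((τ - σ : ℝ) : ℂ) * ⟪Δσ (G xτ), xσ⟫_ℂ := by
      rw [h2, inner_smul_left, Complex.conj_ofReal]
    have e2 : ⟪Δσ (G xτ), xσ⟫_ℂ = ⟪G z, xσ⟫_ℂ := by
      rw [symΔσ, h3, commGS, symS, appSΔ]
    have e3 : ⟪G z, xσ⟫_ℂ = ⟪G z, z⟫_ℂ - (τ : ℂ) * ((‖G z‖ : ℂ)) ^ 2 := by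
      rw [h4, hT]
      simp only [ContinuousLinearMap.sub_apply, ContinuousLinearMap.smul_apply,
        ContinuousLinearMap.one_apply, inner_sub_right, inner_smul_right, hzb]
    rw [e1, e2, e3]
    simp only [Complex.mul_re, Complex.sub_re, Complex.sub_im, Complex.mul_im,
      ← Complex.ofReal_pow, Complex.ofReal_re, Complex.ofReal_im]
    ring
  have hz0 : 0 ≤ (⟪xτ - xσ, xσ⟫_ℂ).re := by
    rw [hkey]
    have hA := auxA G hsym hpos κ hκ hnorm z
    have h6 : τ * ‖G z‖ ^ 2 ≤ κ * ‖G z‖ ^ 2 := mul_le_mul_of_nonneg_right hτ hb0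
    have h5 : 0 ≤ (⟪G z, z⟫_ℂ).re - τ * ‖G z‖ ^ 2 := by linarith
    exact mul_nonneg (by linarith) h5
  -- conclude
  have hns : ‖xτ - xσ‖ ^ 2 = ‖xτ‖ ^ 2 - 2 * (⟪xτ, xσ⟫_ℂ).re + ‖xσ‖ ^ 2 := by
    have := @norm_sub_sq ℂ H _ _ _ xτ xσ
    simpa using this
  have hsplit : (⟪xτ, xσ⟫_ℂ).re = (⟪xτ - xσ, xσ⟫_ℂ).re + ‖xσ‖ ^ 2 := by
    rw [inner_sub_left]
    have h7 : (⟪xσ, xσ⟫_ℂ).re = ‖xσ‖ ^ 2 := by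
      rw [inner_self_eq_norm_sq_to_K (𝕜 := ℂ) xσ]; simp [← Complex.ofReal_pow]
    rw [Complex.sub_re, h7]; ring
  linarith [hns, hsplit, hz0]


/-- Lemma 4.6: if the family `xₙ = (I - (κ - 1/n)G)⁻¹ u` is bounded in norm, then
`u ∈ R(I - κG)`. -/
theorem bounded_resolvents_imp_range
    {H : Type*} [NormedAddCommGroup H] [InnerProductSpace ℂ H] [CompleteSpace H]
    (G : H →L[ℂ] H) (hG : IsSelfAdjoint G)
    (κ : ℝ) (hκ : 0 < κ)
    (hpos : ∃ α > 0, ∀ x : H, α * ‖x‖ ^ 2 ≤ (⟪G x, x⟫_ℂ).re)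
    (hnorm : ‖G‖ = 1 / κ)
    (u : H)
    (hbdd : ∃ M : ℝ, ∀ n : ℕ, ∀ x : H,
      ((1 : H →L[ℂ] H) - ((κ - 1 / (n + 1) : ℝ) : ℂ) • G) x = u → ‖x‖ ≤ M) :
    ∃ x : H, ((1 : H →L[ℂ] H) - (κ : ℂ) • G) x = u := by
  obtain ⟨α, hα0, hco⟩ := hpos
  obtain ⟨M, hM⟩ := hbdd
  have hsym : ∀ x y : H, ⟪G x, y⟫_ℂ = ⟪x, G y⟫_ℂ := fun x y => hG.isSymmetric x y
  have hpos' : ∀ x : H, 0 ≤ (⟪G x, x⟫_ℂ).re := fun x =>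
    le_trans (by positivity) (hco x)
  have hGnorm : ‖G‖ ≤ 1 / κ := le_of_eq hnorm
  obtain ⟨N, hN⟩ := exists_nat_gt (1 / κ)
  set τ' : ℕ → ℝ := fun m => κ - 1 / ((m : ℝ) + N + 1) with hτ'
  have hden : ∀ m : ℕ, (0:ℝ) < (m : ℝ) + N + 1 := by
    intro m; positivity
  have hfrac : ∀ m : ℕ, 1 / ((m : ℝ) + N + 1) < κ := by
    intro m
    have hx := hden m
    rw [div_lt_iff₀ hx]
    have h1 : (1/κ : ℝ) < (m : ℝ) + N + 1 := by
      have : (0:ℝ) ≤ (m:ℝ) := Nat.cast_nonneg m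
      linarith
    have h2 := mul_lt_mul_of_pos_left h1 hκ
    have h3 : κ * (1/κ) = 1 := mul_one_div_cancel hκ.ne'
    linarith
  have hτlt : ∀ m, τ' m < κ := by
    intro m
    have := hden m
    have : (0:ℝ) < 1 / ((m : ℝ) + N + 1) := by positivity
    simp only [hτ']
    linarith
  have hτnonneg : ∀ m, 0 ≤ τ' m := by
    intro m
    have := hfrac m
    simp only [hτ']
    linarith
  have hτmono : Monotone τ' := by
    intro p q hpq
    simp only [hτ']
    have h1 : ((p : ℝ) + N + 1) ≤ ((q : ℝ) + N + 1) := by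
      have : (p:ℝ) ≤ q := Nat.cast_le.mpr hpq
      linarith
    have := one_div_le_one_div_of_le (hden p) h1
    linarith
  -- units
  have hsmall : ∀ m, ‖((τ' m : ℝ) : ℂ) • G‖ < 1 := by
    intro m
    rw [norm_smul]
    have h1 : ‖((τ' m : ℝ) : ℂ)‖ = τ' m := by
      rw [Complex.norm_real, Real.norm_eq_abs, abs_of_nonneg (hτnonneg m)]
    rw [h1]
    calc τ' m * ‖G‖ ≤ τ' m * (1/κ) :=
          mul_le_mul_of_nonneg_left hGnorm (hτnonneg m)
      _ < κ * (1/κ) := by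
          apply mul_lt_mul_of_pos_right (hτlt m)
          positivity
      _ = 1 := mul_one_div_cancel hκ.ne'
  set U : ℕ → (H →L[ℂ] H)ˣ := fun m => Units.oneSub _ (hsmall m) with hU
  have hUval : ∀ m, (U m : H →L[ℂ] H) = 1 - ((τ' m : ℝ) : ℂ) • G := fun m => rfl
  set x : ℕ → H := fun m => (↑(U m)⁻¹ : H →L[ℂ] H) u with hx
  have hxsol : ∀ m, ((1 : H →L[ℂ] H) - ((τ' m : ℝ) : ℂ) • G) (x m) = u := by
    intro m
    rw [← hUval m, hx]
    rw [← ContinuousLinearMap.mul_apply, (U m).mul_inv, ContinuousLinearMap.one_apply]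
  have hxM : ∀ m, ‖x m‖ ≤ M := by
    intro m
    apply hM (m + N) (x m)
    have he : (κ - 1 / (((m + N : ℕ) : ℝ) + 1) : ℝ) = τ' m := by
      simp only [hτ']
      push_cast
      ring
    rw [he]
    exact hxsol m
  have hM0 : 0 ≤ M := le_trans (norm_nonneg (x 0)) (hxM 0)
  -- monotonicity of norms squared
  set s : ℕ → ℝ := fun m => ‖x m‖ ^ 2 with hs
  have hstep : ∀ p q : ℕ, p ≤ q → ‖x q - x p‖ ^ 2 ≤ s q - s p := by
    intro p q hpq
    exact auxB G hsym hpos' κ hκ hGnorm u (τ' p) (τ' q) (hτmono hpq) (hτlt q).le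
      (U p) (U q) (hUval p) (hUval q)
  have hsmono : Monotone s := by
    intro p q hpq
    have h1 := hstep p q hpq
    nlinarith [sq_nonneg ‖x q - x p‖, norm_nonneg (x q - x p)]
  have hsbdd : ∀ m, s m ≤ M ^ 2 := by
    intro m
    simp only [hs]
    exact pow_le_pow_left₀ (norm_nonneg _) (hxM m) 2
  have hscv : Tendsto s atTop (𝓝 (⨆ m, s m)) := by
    apply tendsto_atTop_ciSup hsmono
    exact ⟨M ^ 2, by rintro r ⟨m, rfl⟩; exact hsbdd m⟩
  have hcs : CauchySeq s := hscv.cauchySeq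
  have hcx : CauchySeq x := by
    rw [Metric.cauchySeq_iff']
    intro ε hε
    obtain ⟨K, hK⟩ := Metric.cauchySeq_iff'.mp hcs (ε ^ 2) (by positivity)
    refine ⟨K, fun n hn => ?_⟩
    have h1 := hK n hn
    rw [Real.dist_eq, abs_of_nonneg (by linarith [hsmono hn])] at h1
    have h2 := hstep K n hn
    rw [dist_eq_norm]
    have h3 : ‖x n - x K‖ ^ 2 < ε ^ 2 := by linarith
    exact lt_of_pow_lt_pow_left₀ 2 hε.le h3
  obtain ⟨xlim, hxlim⟩ := cauchySeq_tendsto_of_complete hcx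
  refine ⟨xlim, ?_⟩
  set c : ℕ → ℝ := fun m => 1 / ((m : ℝ) + N + 1) with hc
  have h2 : ∀ m, ((1 : H →L[ℂ] H) - (κ : ℂ) • G) (x m)
      = u - ((c m : ℝ) : ℂ) • G (x m) := by
    intro m
    have h0 := hxsol m
    simp only [ContinuousLinearMap.sub_apply, ContinuousLinearMap.smul_apply,
      ContinuousLinearMap.one_apply] at h0 ⊢
    rw [← h0]
    have hκc : (κ : ℂ) = ((τ' m : ℝ) : ℂ) + ((c m : ℝ) : ℂ) := by
      simp only [hτ', hc]
      push_cast
      ring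
    rw [hκc, add_smul]
    abel
  have hzero : Tendsto (fun m => ((c m : ℝ) : ℂ) • G (x m)) atTop (𝓝 0) := by
    rw [tendsto_zero_iff_norm_tendsto_zero]
    have hb : ∀ m, ‖((c m : ℝ) : ℂ) • G (x m)‖ ≤ 1 / ((m : ℝ) + 1) * (‖G‖ * M) := by
      intro m
      rw [norm_smul]
      have h1 : ‖((c m : ℝ) : ℂ)‖ = c m := by
        rw [Complex.norm_real, Real.norm_eq_abs, abs_of_nonneg]
        simp only [hc]
        positivity
      rw [h1]
      have h3 : ‖G (x m)‖ ≤ ‖G‖ * M := by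
        calc ‖G (x m)‖ ≤ ‖G‖ * ‖x m‖ := G.le_opNorm _
          _ ≤ ‖G‖ * M := mul_le_mul_of_nonneg_left (hxM m) (norm_nonneg G)
      have h4 : c m ≤ 1 / ((m : ℝ) + 1) := by
        simp only [hc]
        apply one_div_le_one_div_of_le (by positivity)
        have : (0:ℝ) ≤ (N:ℝ) := Nat.cast_nonneg N
        linarith
      have h5 : (0:ℝ) ≤ c m := by simp only [hc]; positivity
      calc c m * ‖G (x m)‖ ≤ c m * (‖G‖ * M) :=
            mul_le_mul_of_nonneg_left h3 h5
        _ ≤ 1 / ((m : ℝ) + 1) * (‖G‖ * M) := by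
            apply mul_le_mul_of_nonneg_right h4
            positivity
    have hlim : Tendsto (fun m : ℕ => 1 / ((m : ℝ) + 1) * (‖G‖ * M)) atTop (𝓝 0) := by
      have := tendsto_one_div_add_atTop_nhds_zero_nat.mul_const (‖G‖ * M)
      simpa using this
    exact squeeze_zero (fun m => norm_nonneg _) hb hlim
  have h3 : Tendsto (fun m => ((1 : H →L[ℂ] H) - (κ : ℂ) • G) (x m)) atTop (𝓝 u) := by
    have : Tendsto (fun m => u - ((c m : ℝ) : ℂ) • G (x m)) atTop (𝓝 (u - 0)) :=
      Tendsto.sub tendsto_const_nhds hzero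
    rw [sub_zero] at this
    exact (funext h2 : _) ▸ this
  have h4 : Tendsto (fun m => ((1 : H →L[ℂ] H) - (κ : ℂ) • G) (x m)) atTop
      (𝓝 (((1 : H →L[ℂ] H) - (κ : ℂ) • G) xlim)) :=
    (((1 : H →L[ℂ] H) - (κ : ℂ) • G).continuous.tendsto xlim).comp hxlim
  exact tendsto_nhds_unique h4 h3
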